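/- Under gradient flow of a two-layer linear network, the product β = WᵀA evolves according to vec(dβ/dt) = -(η_w AᵀA ⊕ η_a WᵀW) vec(XᵀXβ - XᵀY), where ⊕ is the Kronecker sum C ⊕ D = C ⊗ I_d + I_c ⊗ D. -/

import Mathlib

open Matrix Kronecker

lemma kron_sum_mulVec {c d : ℕ} (C : Matrix (Fin c) (Fin c) ℝ)
    (D : Matrix (Fin d) (Fin d) ℝ) (G : Matrix (Fin d) (Fin c) ℝ)
    (p : Fin c × Fin d) :
    ((C ⊗ₖ (1 : Matrix (Fin d) (Fin d) ℝ)
      + (1 : Matrix (Fin c) (Fin c) ℝ) ⊗ₖ D) *ᵥ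
      fun q : Fin c × Fin d => G q.2 q.1) p
    = (G * Cᵀ) p.2 p.1 + (D * G) p.2 p.1 := by
  obtain ⟨p1, p2⟩ := p
  simp only [Matrix.mulVec, dotProduct, Matrix.add_apply,
    Matrix.kroneckerMap_apply, Matrix.one_apply, Fintype.sum_prod_type,
    Matrix.mul_apply, Matrix.transpose_apply, add_mul, ite_mul, one_mul,
    zero_mul, mul_ite, mul_one, mul_zero, Finset.sum_add_distrib,
    Finset.sum_ite_eq, Finset.mem_univ, if_true]
  rw [Finset.sum_comm (γ := Fin c)]
  simp [Finset.sum_ite_eq, mul_comm]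

/-- vec(dβ/dt) = -(η_w AᵀA ⊕ η_a WᵀW) vec(XᵀXβ - XᵀY) along the two-layer flow. -/
theorem vec_beta_dynamics (h d c n : ℕ)
    (X : Matrix (Fin n) (Fin d) ℝ) (Y : Matrix (Fin n) (Fin c) ℝ)
    (ηa ηw : ℝ) (hηa : 0 < ηa) (hηw : 0 < ηw)
    (W : ℝ → Matrix (Fin h) (Fin d) ℝ) (A : ℝ → Matrix (Fin h) (Fin c) ℝ)
    (β : ℝ → Matrix (Fin d) (Fin c) ℝ) (hβ : ∀ t, β t = (W t)ᵀ * A t)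
    (hA : ∀ t i j, HasDerivAt (fun s => A s i j)
      ((-ηa • (W t * (Xᵀ * (X * β t - Y)))) i j) t)
    (hW : ∀ t i j, HasDerivAt (fun s => W s i j)
      ((-ηw • (A t * (X * β t - Y)ᵀ * X)) i j) t) :
    ∀ t (p : Fin c × Fin d), HasDerivAt (fun s => β s p.2 p.1)
      (-((((ηw • ((A t)ᵀ * A t)) ⊗ₖ (1 : Matrix (Fin d) (Fin d) ℝ)
          + (1 : Matrix (Fin c) (Fin c) ℝ) ⊗ₖ (ηa • ((W t)ᵀ * W t))) *ᵥ
          fun q : Fin c × Fin d => (Xᵀ * X * β t - Xᵀ * Y) q.2 q.1) p)) t := by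
  intro t p
  have hfun : (fun s => β s p.2 p.1) =
      fun s => ∑ k : Fin h, W s k p.2 * A s k p.1 := by
    funext s
    simp [hβ, Matrix.mul_apply, Matrix.transpose_apply]
  rw [hfun]
  have key : HasDerivAt (fun s => ∑ k : Fin h, W s k p.2 * A s k p.1)
      (∑ k : Fin h, ((-ηw • (A t * (X * β t - Y)ᵀ * X)) k p.2 * A t k p.1
        + W t k p.2 * (-ηa • (W t * (Xᵀ * (X * β t - Y)))) k p.1)) t := by
    apply HasDerivAt.fun_sum
    intro k _
    exact (hW t k p.2).mul (hA t k p.1)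
  convert key using 1
  set G : Matrix (Fin d) (Fin c) ℝ := Xᵀ * (X * β t - Y) with hGdef
  have hG : Xᵀ * X * β t - Xᵀ * Y = G := by
    rw [hGdef, Matrix.mul_sub, Matrix.mul_assoc]
  rw [hG, kron_sum_mulVec]
  -- turn the entrywise sum on the RHS into matrix entries
  have hsum : (∑ k : Fin h, ((-ηw • (A t * (X * β t - Y)ᵀ * X)) k p.2 * A t k p.1
        + W t k p.2 * (-ηa • (W t * G)) k p.1))
      = ((-ηw • (A t * (X * β t - Y)ᵀ * X))ᵀ * A t) p.2 p.1
        + ((W t)ᵀ * (-ηa • (W t * G))) p.2 p.1 := by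
    simp only [Matrix.mul_apply, Matrix.transpose_apply, Finset.sum_add_distrib]
  rw [hsum]
  have hm1 : (-ηw • (A t * (X * β t - Y)ᵀ * X))ᵀ * A t
      = -(G * (ηw • ((A t)ᵀ * A t))ᵀ) := by
    have e1 : (A t * (X * β t - Y)ᵀ * X)ᵀ * A t = G * ((A t)ᵀ * A t) := by
      rw [hGdef]
      simp [Matrix.transpose_mul, Matrix.transpose_transpose, Matrix.mul_assoc]
    rw [Matrix.transpose_smul, Matrix.smul_mul, e1, Matrix.transpose_smul,
      Matrix.transpose_mul, Matrix.transpose_transpose, Matrix.mul_smul, neg_smul]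
  have hm2 : (W t)ᵀ * (-ηa • (W t * G)) = -((ηa • ((W t)ᵀ * W t)) * G) := by
    rw [Matrix.mul_smul, Matrix.smul_mul, ← Matrix.mul_assoc, neg_smul]
  rw [hm1, hm2]
  simp [Matrix.neg_apply]
  ring
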